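/- Let f : 2^[n] → ℝ≥0 be nonnegative, monotone, submodular, and 1-Lipschitz, and let X have a product distribution on subsets of [n]. For any 0 ≤ α ≤ 1, if E[f(X)] ≥ 240/α, then P[ |f(X) − E[f(X)]| > α·E[f(X)] ] ≤ 4·exp(−α²·E[f(X)]/16). -/

import Mathlib

open MeasureTheory Finset

namespace Stmt10Aux

noncomputable def wgt (t : ℝ) (b : Bool) : ℝ := if b then t else 1 - t

lemma wgt_nonneg {t : ℝ} (h0 : 0 ≤ t) (h1 : t ≤ 1) (b : Bool) : 0 ≤ wgt t b := by
  cases b <;> simp [wgt] <;> linarith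

noncomputable def Ex {n : ℕ} (q : Fin n → ℝ) (g : (Fin n → Bool) → ℝ) : ℝ :=
  ∑ x : Fin n → Bool, (∏ i, wgt (q i) (x i)) * g x

lemma Ex_zero (q : Fin 0 → ℝ) (g : (Fin 0 → Bool) → ℝ) :
    Ex q g = g default := by
  rw [Ex]
  rw [Fintype.sum_unique]
  simp only [Finset.univ_eq_empty, Finset.prod_empty, one_mul]
  congr 1
  funext i
  exact i.elim0

lemma Ex_cons {n : ℕ} (q : Fin (n+1) → ℝ) (g : (Fin (n+1) → Bool) → ℝ) :
    Ex q g = (1 - q 0) * Ex (q ∘ Fin.succ) (fun x => g (Fin.cons false x))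
      + q 0 * Ex (q ∘ Fin.succ) (fun x => g (Fin.cons true x)) := by
  have e := (Fin.consEquiv (fun _ : Fin (n+1) => Bool)).sum_comp
      (fun x => (∏ i, wgt (q i) (x i)) * g x)
  rw [Ex, ← e, Fintype.sum_prod_type, Fintype.sum_bool]
  rw [Ex, Ex, Finset.mul_sum, Finset.mul_sum]
  rw [add_comm]
  congr 1 <;>
  · refine Finset.sum_congr rfl fun x _ => ?_
    rw [Fin.prod_univ_succ]
    simp [wgt, Fin.cons_succ, Fin.cons_zero, Function.comp, Fin.consEquiv]
    ring


lemma W_nonneg {n : ℕ} {q : Fin n → ℝ} (hq0 : ∀ i, 0 ≤ q i) (hq1 : ∀ i, q i ≤ 1)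
    (x : Fin n → Bool) : 0 ≤ ∏ i, wgt (q i) (x i) :=
  Finset.prod_nonneg fun i _ => wgt_nonneg (hq0 i) (hq1 i) (x i)

lemma Ex_nonneg {n : ℕ} {q : Fin n → ℝ} (hq0 : ∀ i, 0 ≤ q i) (hq1 : ∀ i, q i ≤ 1)
    {g : (Fin n → Bool) → ℝ} (hg : ∀ x, 0 ≤ g x) : 0 ≤ Ex q g :=
  Finset.sum_nonneg fun x _ => mul_nonneg (W_nonneg hq0 hq1 x) (hg x)

lemma Ex_le_Ex {n : ℕ} {q : Fin n → ℝ} (hq0 : ∀ i, 0 ≤ q i) (hq1 : ∀ i, q i ≤ 1)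
    {g h : (Fin n → Bool) → ℝ} (hgh : ∀ x, g x ≤ h x) : Ex q g ≤ Ex q h :=
  Finset.sum_le_sum fun x _ => mul_le_mul_of_nonneg_left (hgh x) (W_nonneg hq0 hq1 x)

lemma Ex_add {n : ℕ} (q : Fin n → ℝ) (g h : (Fin n → Bool) → ℝ) :
    Ex q (fun x => g x + h x) = Ex q g + Ex q h := by
  simp [Ex, mul_add, Finset.sum_add_distrib]

lemma Ex_smul {n : ℕ} (q : Fin n → ℝ) (c : ℝ) (g : (Fin n → Bool) → ℝ) :
    Ex q (fun x => c * g x) = c * Ex q g := by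
  simp [Ex, Finset.mul_sum]
  congr 1; funext x; ring

lemma Ex_neg {n : ℕ} (q : Fin n → ℝ) (g : (Fin n → Bool) → ℝ) :
    Ex q (fun x => -g x) = -Ex q g := by
  have := Ex_smul q (-1) g
  simpa using this

lemma Ex_one {n : ℕ} (q : Fin n → ℝ) : Ex q (fun _ => 1) = 1 := by
  induction n with
  | zero => rw [Ex_zero]
  | succ n IH => rw [Ex_cons, IH]; ring

lemma cons_mono {n : ℕ} (b : Bool) {x y : Fin n → Bool} (h : x ≤ y) :
    (Fin.cons b x : Fin (n+1) → Bool) ≤ Fin.cons b y := Fin.cons_le_cons.2 ⟨le_rfl, h⟩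

lemma cons_le_cons' {n : ℕ} (x : Fin n → Bool) :
    (Fin.cons false x : Fin (n+1) → Bool) ≤ Fin.cons true x :=
  Fin.cons_le_cons.2 ⟨Bool.false_le true, le_rfl⟩

lemma harris {n : ℕ} : ∀ (q : Fin n → ℝ), (∀ i, 0 ≤ q i) → (∀ i, q i ≤ 1) →
    ∀ (f g : (Fin n → Bool) → ℝ), Monotone f → Monotone g →
    Ex q f * Ex q g ≤ Ex q (fun x => f x * g x) := by
  induction n with
  | zero =>
    intro q _ _ f g _ _
    rw [Ex_zero, Ex_zero, Ex_zero]
  | succ n IH =>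
    intro q hq0 hq1 f g hf hg
    set q' := q ∘ Fin.succ with hq'
    have hq'0 : ∀ i, 0 ≤ q' i := fun i => hq0 _
    have hq'1 : ∀ i, q' i ≤ 1 := fun i => hq1 _
    have hp0 : 0 ≤ q 0 := hq0 0
    have hp1 : q 0 ≤ 1 := hq1 0
    have hf0 : Monotone (fun x => f (Fin.cons false x)) := fun x y h => hf (cons_mono _ h)
    have hf1 : Monotone (fun x => f (Fin.cons true x)) := fun x y h => hf (cons_mono _ h)
    have hg0 : Monotone (fun x => g (Fin.cons false x)) := fun x y h => hg (cons_mono _ h)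
    have hg1 : Monotone (fun x => g (Fin.cons true x)) := fun x y h => hg (cons_mono _ h)
    have I0 := IH q' hq'0 hq'1 _ _ hf0 hg0
    have I1 := IH q' hq'0 hq'1 _ _ hf1 hg1
    have hA : Ex q' (fun x => f (Fin.cons false x)) ≤ Ex q' (fun x => f (Fin.cons true x)) :=
      Ex_le_Ex hq'0 hq'1 fun x => hf (cons_le_cons' x)
    have hB : Ex q' (fun x => g (Fin.cons false x)) ≤ Ex q' (fun x => g (Fin.cons true x)) :=
      Ex_le_Ex hq'0 hq'1 fun x => hg (cons_le_cons' x)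
    rw [Ex_cons q f, Ex_cons q g, Ex_cons q (fun x => f x * g x)]
    nlinarith [mul_nonneg hp0 (sub_nonneg.2 hp1),
      mul_nonneg (sub_nonneg.2 hA) (sub_nonneg.2 hB)]


lemma exp_interp {l t : ℝ} (h0 : 0 ≤ t) (h1 : t ≤ 1) :
    Real.exp (l * t) ≤ 1 + (Real.exp l - 1) * t := by
  have := convexOn_exp.2 (Set.mem_univ (0:ℝ)) (Set.mem_univ l)
    (by linarith : (0:ℝ) ≤ 1 - t) h0 (by ring)
  simp only [smul_eq_mul, mul_zero, zero_add, Real.exp_zero] at this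
  calc Real.exp (l * t) = Real.exp ((1-t) * 0 + t * l) := by ring_nf
    _ ≤ (1-t) * 1 + t * Real.exp l := by simpa using this
    _ = 1 + (Real.exp l - 1) * t := by ring

lemma mgf_bound {n : ℕ} : ∀ (q : Fin n → ℝ), (∀ i, 0 ≤ q i) → (∀ i, q i ≤ 1) →
    ∀ (F : (Fin n → Bool) → ℝ), (∀ x, 0 ≤ F x) → Monotone F →
    (∀ (i : Fin n) (x : Fin n → Bool),
      0 ≤ F (Function.update x i true) - F (Function.update x i false)) →
    (∀ (i : Fin n) (x : Fin n → Bool),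
      F (Function.update x i true) - F (Function.update x i false) ≤ 1) →
    (∀ (i : Fin n) (x y : Fin n → Bool), x ≤ y →
      F (Function.update y i true) - F (Function.update y i false) ≤
      F (Function.update x i true) - F (Function.update x i false)) →
    ∀ (l : ℝ),
    Ex q (fun x => Real.exp (l * F x)) ≤ Real.exp ((Real.exp l - 1) * Ex q F) := by
  induction n with
  | zero =>
    intro q _ _ F hFnn _ _ _ _ l
    rw [Ex_zero, Ex_zero]
    apply Real.exp_le_exp.2
    have h := Real.add_one_le_exp l
    nlinarith [hFnn (default : Fin 0 → Bool)]
  | succ n IH =>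
    intro q hq0 hq1 F hFnn hFmono h1 h1' h2 l
    set q' := q ∘ Fin.succ with hq'def
    have hq'0 : ∀ i, 0 ≤ q' i := fun i => hq0 _
    have hq'1 : ∀ i, q' i ≤ 1 := fun i => hq1 _
    have hp0 : 0 ≤ q 0 := hq0 0
    have hp1 : q 0 ≤ 1 := hq1 0
    set φ := Real.exp l - 1 with hφdef
    set f0 : (Fin n → Bool) → ℝ := fun x => F (Fin.cons false x) with hf0def
    set f1 : (Fin n → Bool) → ℝ := fun x => F (Fin.cons true x) with hf1def
    set g : (Fin n → Bool) → ℝ := fun x => f1 x - f0 x with hgdef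
    -- pointwise bounds on g
    have hcu : ∀ (x : Fin n → Bool) (b : Bool),
        Function.update (Fin.cons false x : Fin (n+1) → Bool) 0 b = Fin.cons b x := by
      intro x b; exact Fin.update_cons_zero ..
    have hg0 : ∀ x, 0 ≤ g x := by
      intro x
      have := h1 0 (Fin.cons false x)
      rwa [hcu x true, hcu x false] at this
    have hg1 : ∀ x, g x ≤ 1 := by
      intro x
      have := h1' 0 (Fin.cons false x)
      rwa [hcu x true, hcu x false] at this
    have hganti : ∀ x y, x ≤ y → g y ≤ g x := by
      intro x y hxy
      have := h2 0 (Fin.cons false x) (Fin.cons false y) (cons_mono false hxy)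
      rwa [hcu x true, hcu x false, hcu y true, hcu y false] at this
    -- f0 inherits all hypotheses
    have hf0nn : ∀ x, 0 ≤ f0 x := fun x => hFnn _
    have hf0mono : Monotone f0 := fun x y h => hFmono (cons_mono _ h)
    have hcu' : ∀ (x : Fin n → Bool) (i : Fin n) (b b' : Bool),
        (Fin.cons b (Function.update x i b') : Fin (n+1) → Bool)
          = Function.update (Fin.cons b x) i.succ b' := by
      intro x i b b'; exact Fin.cons_update ..
    have hf01 : ∀ (i : Fin n) x, 0 ≤ f0 (Function.update x i true) - f0 (Function.update x i false) := by
      intro i x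
      have := h1 i.succ (Fin.cons false x)
      simp only [hf0def, hcu']
      exact this
    have hf01' : ∀ (i : Fin n) x, f0 (Function.update x i true) - f0 (Function.update x i false) ≤ 1 := by
      intro i x
      have := h1' i.succ (Fin.cons false x)
      simp only [hf0def, hcu']
      exact this
    have hf02 : ∀ (i : Fin n) (x y : Fin n → Bool), x ≤ y →
        f0 (Function.update y i true) - f0 (Function.update y i false) ≤
        f0 (Function.update x i true) - f0 (Function.update x i false) := by
      intro i x y hxy
      have := h2 i.succ (Fin.cons false x) (Fin.cons false y) (cons_mono false hxy)
      simp only [hf0def, hcu']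
      exact this
    -- abbreviations
    set A : ℝ := Ex q' (fun x => Real.exp (l * f0 x)) with hAdef
    set Eg : ℝ := Ex q' g with hEgdef
    have hApos : 0 ≤ A := Ex_nonneg hq'0 hq'1 (fun x => (Real.exp_pos _).le)
    have hEgpos : 0 ≤ Eg := Ex_nonneg hq'0 hq'1 hg0
    -- pointwise: exp (l * f1 x) ≤ exp (l * f0 x) * (1 + φ * g x)
    have hpt : ∀ x, Real.exp (l * f1 x) ≤ Real.exp (l * f0 x) * (1 + φ * g x) := by
      intro x
      have h₁ : Real.exp (l * f1 x) = Real.exp (l * f0 x) * Real.exp (l * g x) := by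
        rw [← Real.exp_add]; congr 1; simp [hgdef]; ring
      rw [h₁]
      have := exp_interp (l := l) (hg0 x) (hg1 x)
      have h2' : (1:ℝ) + (Real.exp l - 1) * g x = 1 + φ * g x := by rw [hφdef]
      nlinarith [Real.exp_pos (l * f0 x), this]
    -- correlation step
    have hcorr : q 0 * φ * Ex q' (fun x => Real.exp (l * f0 x) * g x) ≤ q 0 * φ * (A * Eg) := by
      rcases le_or_gt 0 l with hl | hl
      · -- l ≥ 0 : exp(l f0) monotone, g antitone ⇒ E[fg] ≤ Ef Eg
        have hφ0 : 0 ≤ φ := by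
          have := Real.add_one_le_exp l; simp [hφdef]; linarith
        have hmono : Monotone (fun x => Real.exp (l * f0 x)) := fun x y h =>
          Real.exp_le_exp.2 (mul_le_mul_of_nonneg_left (hf0mono h) hl)
        have hneg : Monotone (fun x => -g x) := fun x y h => neg_le_neg (hganti x y h)
        have := harris q' hq'0 hq'1 _ _ hmono hneg
        have hle : Ex q' (fun x => Real.exp (l * f0 x) * g x) ≤ A * Eg := by
          have e1 : Ex q' (fun x => Real.exp (l * f0 x) * -g x)
              = -Ex q' (fun x => Real.exp (l * f0 x) * g x) := by
            rw [← Ex_neg]; congr 1; funext x; ring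
          have e2 : Ex q' (fun x => -g x) = -Eg := by
            rw [Ex_neg, hEgdef]
          rw [e1, e2] at this
          nlinarith
        exact mul_le_mul_of_nonneg_left hle (mul_nonneg hp0 hφ0)
      · -- l < 0 : exp(l f0) antitone, g antitone ⇒ E[fg] ≥ Ef Eg ; coefficient ≤ 0
        have hφ0 : φ ≤ 0 := by
          simp only [hφdef, sub_nonpos]
          exact Real.exp_le_one_iff.2 hl.le
        have hanti1 : Monotone (fun x => -Real.exp (l * f0 x)) := by
          intro x y h
          simp only [neg_le_neg_iff]
          exact Real.exp_le_exp.2 (mul_le_mul_of_nonpos_left (hf0mono h) hl.le)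
        have hneg : Monotone (fun x => -g x) := fun x y h => neg_le_neg (hganti x y h)
        have := harris q' hq'0 hq'1 _ _ hanti1 hneg
        have hge : A * Eg ≤ Ex q' (fun x => Real.exp (l * f0 x) * g x) := by
          have e1 : Ex q' (fun x => -Real.exp (l * f0 x) * -g x)
              = Ex q' (fun x => Real.exp (l * f0 x) * g x) := by
            congr 1; funext x; ring
          have e2 : Ex q' (fun x => -Real.exp (l * f0 x)) = -A := by
            rw [Ex_neg, hAdef]
          have e3 : Ex q' (fun x => -g x) = -Eg := by rw [Ex_neg, hEgdef]
          rw [e1, e2, e3] at this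
          nlinarith
        have hc : q 0 * φ ≤ 0 := mul_nonpos_of_nonneg_of_nonpos hp0 hφ0
        exact mul_le_mul_of_nonpos_left hge hc
    -- assemble
    have step1 : Ex q (fun x => Real.exp (l * F x))
        ≤ A + q 0 * φ * Ex q' (fun x => Real.exp (l * f0 x) * g x) := by
      rw [Ex_cons]
      have hE1 : Ex q' (fun x => Real.exp (l * F (Fin.cons true x)))
          ≤ A + φ * Ex q' (fun x => Real.exp (l * f0 x) * g x) := by
        have : Ex q' (fun x => Real.exp (l * F (Fin.cons true x)))
            ≤ Ex q' (fun x => Real.exp (l * f0 x) + φ * (Real.exp (l * f0 x) * g x)) := by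
          apply Ex_le_Ex hq'0 hq'1
          intro x
          have := hpt x
          simp only [hf1def] at this ⊢
          nlinarith
        calc Ex q' (fun x => Real.exp (l * F (Fin.cons true x)))
            ≤ Ex q' (fun x => Real.exp (l * f0 x) + φ * (Real.exp (l * f0 x) * g x)) := this
          _ = A + φ * Ex q' (fun x => Real.exp (l * f0 x) * g x) := by
              rw [Ex_add, Ex_smul, hAdef]
      have hE0 : Ex q' (fun x => Real.exp (l * F (Fin.cons false x))) = A := by
        rw [hAdef]
      rw [hE0]
      nlinarith [mul_le_mul_of_nonneg_left hE1 hp0]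
    have step2 : A + q 0 * φ * Ex q' (fun x => Real.exp (l * f0 x) * g x)
        ≤ A * (1 + q 0 * φ * Eg) := by
      have := hcorr
      nlinarith
    have step3 : A * (1 + q 0 * φ * Eg) ≤ A * Real.exp (q 0 * φ * Eg) := by
      apply mul_le_mul_of_nonneg_left _ hApos
      have := Real.add_one_le_exp (q 0 * φ * Eg)
      linarith
    have step4 : A ≤ Real.exp (φ * Ex q' f0) := by
      have := IH q' hq'0 hq'1 f0 hf0nn hf0mono hf01 hf01' hf02 l
      rw [hAdef, hφdef]
      exact this
    have hExF : Ex q F = Ex q' f0 + q 0 * Eg := by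
      rw [Ex_cons]
      have : Ex q' (fun x => F (Fin.cons true x)) = Ex q' f0 + Eg := by
        rw [hEgdef, ← Ex_add]
        congr 1; funext x; simp [hgdef, hf0def, hf1def]
      rw [this]
      have h0 : Ex q' (fun x => F (Fin.cons false x)) = Ex q' f0 := rfl
      rw [h0]; ring
    calc Ex q (fun x => Real.exp (l * F x))
        ≤ A * Real.exp (q 0 * φ * Eg) := le_trans step1 (le_trans step2 step3)
      _ ≤ Real.exp (φ * Ex q' f0) * Real.exp (q 0 * φ * Eg) :=
          mul_le_mul_of_nonneg_right step4 (Real.exp_pos _).le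
      _ = Real.exp ((Real.exp l - 1) * Ex q F) := by
          rw [← Real.exp_add, hExF, hφdef]; congr 1; ring


lemma exp_cubic_bound {x : ℝ} (hx : |x| ≤ 1) :
    Real.exp x ≤ 1 + x + x^2/2 + |x|^3 * (2/9) := by
  have h := Real.exp_bound hx (by norm_num : 0 < 3)
  have hs : ∑ i ∈ Finset.range 3, x ^ i / (Nat.factorial i) = 1 + x + x^2/2 := by
    norm_num [Finset.sum_range_succ, Nat.factorial]
  rw [hs] at h
  have h2 : (((3:ℕ).succ : ℝ)) / ((Nat.factorial 3 : ℕ) * (3:ℕ)) = 2/9 := by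
    norm_num [Nat.factorial]
  rw [h2] at h
  have := (abs_le.1 h).2
  linarith

lemma num_upper {a : ℝ} (h0 : 0 ≤ a) (h1 : a ≤ 1) :
    (Real.exp (a/2) - 1) - a/2*(1+a) ≤ -(a^2)/16 := by
  have hx : |a/2| ≤ 1 := by rw [abs_of_nonneg (by linarith)]; linarith
  have h := exp_cubic_bound hx
  rw [abs_of_nonneg (by linarith : (0:ℝ) ≤ a/2)] at h
  nlinarith [sq_nonneg a, mul_nonneg (mul_nonneg h0 h0) h0]

lemma num_lower {a : ℝ} (h0 : 0 ≤ a) (h1 : a ≤ 1) :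
    (Real.exp (-(a/2)) - 1) + a/2*(1-a) ≤ -(a^2)/16 := by
  have hx : |(-(a/2))| ≤ 1 := by rw [abs_neg, abs_of_nonneg (by linarith)]; linarith
  have h := exp_cubic_bound hx
  rw [abs_neg, abs_of_nonneg (by linarith : (0:ℝ) ≤ a/2)] at h
  nlinarith [sq_nonneg a, mul_nonneg (mul_nonneg h0 h0) h0]

end Stmt10Aux


open Stmt10Aux in
theorem stmt_10 (n : ℕ) (f : Finset (Fin n) → ℝ)
    (hnn : ∀ S, 0 ≤ f S)
    (hmono : ∀ S T : Finset (Fin n), S ⊆ T → f S ≤ f T)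
    (hsub : ∀ A B : Finset (Fin n), f (A ∪ B) + f (A ∩ B) ≤ f A + f B)
    (hlip : ∀ (S : Finset (Fin n)) (x : Fin n), |f (insert x S) - f S| ≤ 1)
    (p : Fin n → Measure Bool) [∀ i, IsProbabilityMeasure (p i)]
    (α : ℝ) (hα0 : 0 ≤ α) (hα1 : α ≤ 1)
    (E : ℝ)
    (hE : E = ∫ x, f (Finset.univ.filter (fun i => x i = true)) ∂(Measure.pi p))
    (hbig : 240 / α ≤ E) :
    (Measure.pi p) {x | α * E < |f (Finset.univ.filter (fun i => x i = true)) - E|}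
      ≤ ENNReal.ofReal (4 * Real.exp (-(α ^ 2 * E) / 16)) := by
  classical
  set μ := Measure.pi p with hμ
  set S : (Fin n → Bool) → Finset (Fin n) :=
    fun x => Finset.univ.filter (fun i => x i = true) with hSdef
  set F : (Fin n → Bool) → ℝ := fun x => f (S x) with hFdef
  set q : Fin n → ℝ := fun i => (p i {true}).toReal with hqdef
  have hq0 : ∀ i, 0 ≤ q i := fun i => ENNReal.toReal_nonneg
  have hq1 : ∀ i, q i ≤ 1 := by
    intro i
    have h := prob_le_one (μ := p i) (s := {true})
    have := ENNReal.toReal_mono (by norm_num) h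
    simpa using this
  -- singleton measure
  have hsingle : ∀ x : Fin n → Bool, μ {x} = ENNReal.ofReal (∏ i, wgt (q i) (x i)) := by
    intro x
    have h1 : ({x} : Set (Fin n → Bool)) = Set.pi Set.univ (fun i => {x i}) :=
      (Set.univ_pi_singleton x).symm
    rw [hμ, h1, Measure.pi_pi,
      ENNReal.ofReal_prod_of_nonneg (fun i _ => wgt_nonneg (hq0 i) (hq1 i) (x i))]
    apply Finset.prod_congr rfl
    intro i _
    cases hxi : x i
    · have hc : ({(false : Bool)} : Set Bool) = ({true} : Set Bool)ᶜ := by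
        ext b; cases b <;> simp
      rw [hc, measure_compl (measurableSet_singleton true) (measure_ne_top _ _)]
      have hw : wgt (q i) false = 1 - q i := rfl
      rw [hw, ENNReal.ofReal_sub _ (hq0 i), ENNReal.ofReal_one,
        ENNReal.ofReal_toReal (measure_ne_top _ _), measure_univ]
    · have hw : wgt (q i) true = q i := rfl
      rw [hw, ENNReal.ofReal_toReal (measure_ne_top _ _)]
  -- expectation
  have hint : E = Ex q F := by
    rw [hE, integral_fintype (Integrable.of_finite)]
    apply Finset.sum_congr rfl
    intro x _
    rw [measureReal_def, hsingle x, ENNReal.toReal_ofReal (W_nonneg hq0 hq1 x), smul_eq_mul]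
  -- structural hypotheses on F
  have hSmono : ∀ x y : Fin n → Bool, x ≤ y → S x ⊆ S y := by
    intro x y hxy j hj
    simp only [hSdef, Finset.mem_filter, Finset.mem_univ, true_and] at hj ⊢
    have := hxy j
    rw [hj] at this
    exact le_antisymm (Bool.le_true _) this
  have hFnn : ∀ x, 0 ≤ F x := fun x => hnn _
  have hFmono : Monotone F := fun x y h => hmono _ _ (hSmono x y h)
  have hSup : ∀ (x : Fin n → Bool) (i : Fin n) (b : Bool),
      S (Function.update x i b) = if b then insert i (S x) else (S x).erase i := by
    intro x i b
    ext j
    rcases eq_or_ne j i with rfl | hj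
    · cases b <;> simp [hSdef, Function.update_self]
    · cases b <;>
        simp [hSdef, Function.update_of_ne hj, hj]
  have hkey : ∀ (x : Fin n → Bool) (i : Fin n),
      F (Function.update x i true) - F (Function.update x i false)
        = f (insert i ((S x).erase i)) - f ((S x).erase i) := by
    intro x i
    rw [hFdef]
    simp only [hSup, if_true, if_false]
    congr 2
    ext j
    rcases eq_or_ne j i with rfl | hj
    · simp
    · simp [hj]
  have hh1 : ∀ (i : Fin n) (x : Fin n → Bool),
      0 ≤ F (Function.update x i true) - F (Function.update x i false) := by
    intro i x
    rw [hkey]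
    have := hmono ((S x).erase i) (insert i ((S x).erase i)) (Finset.subset_insert _ _)
    linarith
  have hh1' : ∀ (i : Fin n) (x : Fin n → Bool),
      F (Function.update x i true) - F (Function.update x i false) ≤ 1 := by
    intro i x
    rw [hkey]
    exact (abs_le.1 (hlip ((S x).erase i) i)).2
  have hh2 : ∀ (i : Fin n) (x y : Fin n → Bool), x ≤ y →
      F (Function.update y i true) - F (Function.update y i false) ≤
      F (Function.update x i true) - F (Function.update x i false) := by
    intro i x y hxy
    rw [hkey, hkey]
    set Tx := (S x).erase i
    set Ty := (S y).erase i
    have hsubset : Tx ⊆ Ty := Finset.erase_subset_erase i (hSmono x y hxy)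
    have hiTy : i ∉ Ty := Finset.notMem_erase i _
    have hU : insert i Tx ∪ Ty = insert i Ty := by
      ext j
      simp only [Finset.mem_union, Finset.mem_insert]
      constructor
      · rintro (⟨rfl | hj⟩ | hj)
        · exact Or.inl rfl
        · exact Or.inr (hsubset hj)
        · exact Or.inr hj
      · rintro (rfl | hj)
        · exact Or.inl (Or.inl rfl)
        · exact Or.inr hj
    have hI : insert i Tx ∩ Ty = Tx := by
      ext j
      simp only [Finset.mem_inter, Finset.mem_insert]
      constructor
      · rintro ⟨rfl | hj, hj'⟩
        · exact absurd hj' hiTy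
        · exact hj
      · intro hj
        exact ⟨Or.inr hj, hsubset hj⟩
    have := hsub (insert i Tx) Ty
    rw [hU, hI] at this
    linarith
  have hE0 : 0 ≤ E := by
    rw [hint]; exact Ex_nonneg hq0 hq1 hFnn
  -- measure vs weights
  have hmeas : ∀ s : Set (Fin n → Bool),
      μ s ≤ ENNReal.ofReal
        (∑ x ∈ Finset.univ.filter (· ∈ s), ∏ i, wgt (q i) (x i)) := by
    intro s
    have hcover : s ⊆ ⋃ x ∈ Finset.univ.filter (· ∈ s), ({x} : Set (Fin n → Bool)) := by
      intro x hx
      simp only [Set.mem_iUnion, Set.mem_singleton_iff, Finset.mem_filter, Finset.mem_univ]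
      exact ⟨x, ⟨trivial, hx⟩, rfl⟩
    calc μ s ≤ μ (⋃ x ∈ Finset.univ.filter (· ∈ s), ({x} : Set (Fin n → Bool))) :=
          measure_mono hcover
      _ ≤ ∑ x ∈ Finset.univ.filter (· ∈ s), μ {x} := measure_biUnion_finset_le _ _
      _ = ENNReal.ofReal (∑ x ∈ Finset.univ.filter (· ∈ s), ∏ i, wgt (q i) (x i)) := by
          rw [ENNReal.ofReal_sum_of_nonneg (fun x _ => W_nonneg hq0 hq1 x)]
          exact Finset.sum_congr rfl fun x _ => hsingle x
  -- Chernoff bounds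
  have hMGFu := mgf_bound q hq0 hq1 F hFnn hFmono hh1 hh1' hh2 (α/2)
  have hMGFl := mgf_bound q hq0 hq1 F hFnn hFmono hh1 hh1' hh2 (-(α/2))
  set A : Set (Fin n → Bool) := {x | (1+α)*E < F x} with hAdef
  set B : Set (Fin n → Bool) := {x | F x < (1-α)*E} with hBdef
  set u : ℝ := Real.exp (-(α^2*E)/16) with hudef
  have hup : ∑ x ∈ Finset.univ.filter (· ∈ A), (∏ i, wgt (q i) (x i)) ≤ u := by
    have hterm : ∀ x ∈ Finset.univ.filter (· ∈ A),
        (∏ i, wgt (q i) (x i)) ≤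
        (∏ i, wgt (q i) (x i)) * (Real.exp (α/2 * F x) * Real.exp (-(α/2*(1+α)*E))) := by
      intro x hx
      simp only [Finset.mem_filter, hAdef, Set.mem_setOf_eq] at hx
      have h1 : (1:ℝ) ≤ Real.exp (α/2 * F x) * Real.exp (-(α/2*(1+α)*E)) := by
        rw [← Real.exp_add]
        have h0 : (0:ℝ) ≤ α/2 * F x + -(α/2*(1+α)*E) := by nlinarith [hx.2]
        linarith [Real.add_one_le_exp (α/2 * F x + -(α/2*(1+α)*E))]
      nlinarith [W_nonneg hq0 hq1 x]
    calc ∑ x ∈ Finset.univ.filter (· ∈ A), (∏ i, wgt (q i) (x i))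
        ≤ ∑ x ∈ Finset.univ.filter (· ∈ A),
            (∏ i, wgt (q i) (x i)) * (Real.exp (α/2 * F x) * Real.exp (-(α/2*(1+α)*E))) :=
          Finset.sum_le_sum hterm
      _ ≤ ∑ x : Fin n → Bool,
            (∏ i, wgt (q i) (x i)) * (Real.exp (α/2 * F x) * Real.exp (-(α/2*(1+α)*E))) := by
          apply Finset.sum_le_sum_of_subset_of_nonneg (Finset.filter_subset _ _)
          intro x _ _
          exact mul_nonneg (W_nonneg hq0 hq1 x)
            (mul_nonneg (Real.exp_pos _).le (Real.exp_pos _).le)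
      _ = Ex q (fun x => Real.exp (α/2 * F x)) * Real.exp (-(α/2*(1+α)*E)) := by
          rw [Ex, Finset.sum_mul]
          exact Finset.sum_congr rfl fun x _ => by ring
      _ ≤ Real.exp ((Real.exp (α/2) - 1) * Ex q F) * Real.exp (-(α/2*(1+α)*E)) :=
          mul_le_mul_of_nonneg_right hMGFu (Real.exp_pos _).le
      _ ≤ u := by
          rw [← Real.exp_add, hudef]
          apply Real.exp_le_exp.2
          rw [← hint]
          nlinarith [mul_le_mul_of_nonneg_right (num_upper hα0 hα1) hE0]
  have hlo : ∑ x ∈ Finset.univ.filter (· ∈ B), (∏ i, wgt (q i) (x i)) ≤ u := by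
    have hterm : ∀ x ∈ Finset.univ.filter (· ∈ B),
        (∏ i, wgt (q i) (x i)) ≤
        (∏ i, wgt (q i) (x i)) * (Real.exp (-(α/2) * F x) * Real.exp (α/2*(1-α)*E)) := by
      intro x hx
      simp only [Finset.mem_filter, hBdef, Set.mem_setOf_eq] at hx
      have h1 : (1:ℝ) ≤ Real.exp (-(α/2) * F x) * Real.exp (α/2*(1-α)*E) := by
        rw [← Real.exp_add]
        have h0 : (0:ℝ) ≤ -(α/2) * F x + α/2*(1-α)*E := by nlinarith [hx.2]
        linarith [Real.add_one_le_exp (-(α/2) * F x + α/2*(1-α)*E)]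
      nlinarith [W_nonneg hq0 hq1 x]
    calc ∑ x ∈ Finset.univ.filter (· ∈ B), (∏ i, wgt (q i) (x i))
        ≤ ∑ x ∈ Finset.univ.filter (· ∈ B),
            (∏ i, wgt (q i) (x i)) * (Real.exp (-(α/2) * F x) * Real.exp (α/2*(1-α)*E)) :=
          Finset.sum_le_sum hterm
      _ ≤ ∑ x : Fin n → Bool,
            (∏ i, wgt (q i) (x i)) * (Real.exp (-(α/2) * F x) * Real.exp (α/2*(1-α)*E)) := by
          apply Finset.sum_le_sum_of_subset_of_nonneg (Finset.filter_subset _ _)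
          intro x _ _
          exact mul_nonneg (W_nonneg hq0 hq1 x)
            (mul_nonneg (Real.exp_pos _).le (Real.exp_pos _).le)
      _ = Ex q (fun x => Real.exp (-(α/2) * F x)) * Real.exp (α/2*(1-α)*E) := by
          rw [Ex, Finset.sum_mul]
          exact Finset.sum_congr rfl fun x _ => by ring
      _ ≤ Real.exp ((Real.exp (-(α/2)) - 1) * Ex q F) * Real.exp (α/2*(1-α)*E) :=
          mul_le_mul_of_nonneg_right hMGFl (Real.exp_pos _).le
      _ ≤ u := by
          rw [← Real.exp_add, hudef]
          apply Real.exp_le_exp.2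
          rw [← hint]
          nlinarith [mul_le_mul_of_nonneg_right (num_lower hα0 hα1) hE0]
  -- final assembly
  have hTsub : {x | α * E < |f (Finset.univ.filter (fun i => x i = true)) - E|} ⊆ A ∪ B := by
    intro x hx
    simp only [Set.mem_setOf_eq] at hx
    have hFx : f (Finset.univ.filter (fun i => x i = true)) = F x := rfl
    rw [hFx] at hx
    rcases lt_abs.1 hx with h | h
    · exact Or.inl (by simp only [hAdef, Set.mem_setOf_eq]; linarith)
    · exact Or.inr (by simp only [hBdef, Set.mem_setOf_eq]; linarith)
  calc μ {x | α * E < |f (Finset.univ.filter (fun i => x i = true)) - E|}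
      ≤ μ (A ∪ B) := measure_mono hTsub
    _ ≤ μ A + μ B := measure_union_le _ _
    _ ≤ ENNReal.ofReal (∑ x ∈ Finset.univ.filter (· ∈ A), ∏ i, wgt (q i) (x i))
        + ENNReal.ofReal (∑ x ∈ Finset.univ.filter (· ∈ B), ∏ i, wgt (q i) (x i)) :=
        add_le_add (hmeas A) (hmeas B)
    _ ≤ ENNReal.ofReal u + ENNReal.ofReal u :=
        add_le_add (ENNReal.ofReal_le_ofReal hup) (ENNReal.ofReal_le_ofReal hlo)
    _ ≤ ENNReal.ofReal (4 * Real.exp (-(α ^ 2 * E) / 16)) := by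
        have hu0 : 0 ≤ u := hudef ▸ (Real.exp_pos _).le
        rw [← ENNReal.ofReal_add hu0 hu0]
        apply ENNReal.ofReal_le_ofReal
        rw [hudef]
        nlinarith [Real.exp_pos (-(α^2*E)/16)]
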